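/- arXiv:math/0011104 — 3 statements merged into one kernel-verified Lean document; each statement's English description precedes it below -/
import Mathlib

section
/- Let π_F denote the orthogonal projection of V₁ × V₂ onto F (with respect to the product inner product), let π₁ : V₁ × V₂ → V₁ be the projection onto the first factor, and define the linear endomorphism I : V₁ → V₁ by I(v) = π₁(π_F(v,0)). Then (det I)² ≥ 4^{-l} · γ^{2l}. -/
open RealInnerProductSpace

/-- Lemma 6.1(a): let `V₁, V₂` be real inner product spaces of dimension `l`,
let `F ⊂ V₁ × V₂` be the graph of a linear isomorphism `F̃ : V₂ → V₁` with
`‖v‖ ≤ ‖w‖` for all `(v,w) ∈ F`, and let `γ = det(F̃* ∘ F̃)`.  Let `P` be the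
orthogonal projection of `V₁ × V₂` onto `F` (with respect to the product inner
product), and let `I : V₁ → V₁` be `I(v) = π₁(P(v,0))`.  Then
`(det I)² ≥ 4^{-l}·γ^{2l}`. -/
theorem stmt_0 {V₁ V₂ : Type*}
    [NormedAddCommGroup V₁] [InnerProductSpace ℝ V₁]
    [NormedAddCommGroup V₂] [InnerProductSpace ℝ V₂]
    [FiniteDimensional ℝ V₁] [FiniteDimensional ℝ V₂]
    (l : ℕ) (hl₁ : Module.finrank ℝ V₁ = l) (hl₂ : Module.finrank ℝ V₂ = l)
    (Ft : V₂ →ₗ[ℝ] V₁) (hFt : Function.Bijective Ft)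
    (F : Submodule ℝ (V₁ × V₂))
    (hF : ∀ p : V₁ × V₂, p ∈ F ↔ p.1 = Ft p.2)
    (hle : ∀ p ∈ F, ‖(p : V₁ × V₂).1‖ ≤ ‖(p : V₁ × V₂).2‖)
    (γ : ℝ) (hγ : γ = LinearMap.det ((LinearMap.adjoint Ft).comp Ft))
    -- `P` is the orthogonal projection of `V₁ × V₂` onto `F` with respect to
    -- the product inner product `⟨(v,w),(v',w')⟩ = ⟨v,v'⟩ + ⟨w,w'⟩`:
    (P : V₁ × V₂ →ₗ[ℝ] V₁ × V₂)
    (hPmem : ∀ x, P x ∈ F)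
    (hPorth : ∀ x : V₁ × V₂, ∀ p ∈ F,
      ⟪x.1 - (P x).1, (p : V₁ × V₂).1⟫ + ⟪x.2 - (P x).2, (p : V₁ × V₂).2⟫ = 0)
    (I : V₁ →ₗ[ℝ] V₁) (hI : ∀ v : V₁, I v = (P (v, 0)).1) :
    (LinearMap.det I) ^ 2 ≥ (4 : ℝ) ^ (-(l : ℤ)) * γ ^ (2 * l) := by
  classical
  set A : V₂ →ₗ[ℝ] V₂ := (LinearMap.adjoint Ft).comp Ft with hA_def
  have hAsym : A.IsSymmetric := by
    intro x y
    simp only [hA_def, LinearMap.comp_apply]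
    rw [LinearMap.adjoint_inner_left, LinearMap.adjoint_inner_right]
  set b : OrthonormalBasis (Fin l) ℝ V₂ := hAsym.eigenvectorBasis hl₂ with hb_def
  set μ : Fin l → ℝ := hAsym.eigenvalues hl₂ with hμ_def
  have hAb : ∀ i, A (b i) = μ i • b i := fun i => by
    exact_mod_cast hAsym.apply_eigenvectorBasis hl₂ i
  -- the eigenvalues equal ‖Ft (b i)‖²
  have hμ_eq : ∀ i, μ i = ‖Ft (b i)‖ ^ 2 := by
    intro i
    have h1 : ⟪A (b i), b i⟫ = μ i := by
      rw [hAb i, real_inner_smul_left]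
      have : ⟪b i, b i⟫ = 1 := by
        rw [real_inner_self_eq_norm_sq, b.orthonormal.1 i]; norm_num
      rw [this, mul_one]
    have h2 : ⟪A (b i), b i⟫ = ‖Ft (b i)‖ ^ 2 := by
      simp only [hA_def, LinearMap.comp_apply]
      rw [LinearMap.adjoint_inner_left, real_inner_self_eq_norm_sq]
    rw [← h1, h2]
  have hμpos : ∀ i, 0 < μ i := by
    intro i
    rw [hμ_eq i]
    have hne : Ft (b i) ≠ 0 := by
      intro h
      exact b.toBasis.ne_zero i (by simpa using hFt.injective (h.trans (map_zero Ft).symm))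
    have hpos : 0 < ‖Ft (b i)‖ := norm_pos_iff.mpr hne
    positivity
  have hμle : ∀ i, μ i ≤ 1 := by
    intro i
    have hmem : ((Ft (b i), b i) : V₁ × V₂) ∈ F := (hF _).mpr rfl
    have := hle _ hmem
    simp only at this
    have hb1 : ‖b i‖ = 1 := b.orthonormal.1 i
    rw [hμ_eq i]
    calc ‖Ft (b i)‖ ^ 2 ≤ ‖b i‖ ^ 2 := by
          apply pow_le_pow_left₀ (norm_nonneg _) (by simpa [hb1] using this)
      _ = 1 := by rw [hb1]; norm_num
  -- determinant of an operator diagonal in the basis b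
  have hdetdiag : ∀ (T : V₂ →ₗ[ℝ] V₂) (ν : Fin l → ℝ),
      (∀ i, T (b i) = ν i • b i) → LinearMap.det T = ∏ i, ν i := by
    intro T ν h
    rw [← LinearMap.det_toMatrix b.toBasis]
    have hm : LinearMap.toMatrix b.toBasis b.toBasis T = Matrix.diagonal ν := by
      ext i j
      rw [LinearMap.toMatrix_apply, OrthonormalBasis.coe_toBasis, h j]
      rw [map_smul]
      simp [Matrix.diagonal, Finsupp.single_apply]
      rcases eq_or_ne i j with rfl | hij
      · simp
      · simp [hij, Ne.symm hij]
    rw [hm, Matrix.det_diagonal]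
  -- K v = second component of P (v, 0)
  set K : V₁ →ₗ[ℝ] V₂ := (LinearMap.snd ℝ V₁ V₂) ∘ₗ (P ∘ₗ LinearMap.inl ℝ V₁ V₂) with hK_def
  have hKapp : ∀ v : V₁, K v = (P (v, 0)).2 := fun v => rfl
  have hPfst : ∀ v : V₁, (P (v, 0)).1 = Ft (K v) := fun v => (hF _).mp (hPmem (v, 0))
  have hIK : I = Ft ∘ₗ K := by
    ext v
    rw [LinearMap.comp_apply, hI, hPfst]
  -- key identity: adjoint Ft = (1 + A) ∘ K
  have hkey : ∀ v : V₁, LinearMap.adjoint Ft v = K v + A (K v) := by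
    intro v
    apply ext_inner_right ℝ
    intro u
    have h1 := hPorth (v, 0) (Ft u, u) ((hF _).mpr rfl)
    simp only [hPfst v, ← hKapp v] at h1
    have e1 : ⟪LinearMap.adjoint Ft v, u⟫ = ⟪v, Ft u⟫ := LinearMap.adjoint_inner_left Ft u v
    have e2 : ⟪A (K v), u⟫ = ⟪Ft (K v), Ft u⟫ := by
      simp only [hA_def, LinearMap.comp_apply]
      exact LinearMap.adjoint_inner_left Ft u (Ft (K v))
    rw [inner_add_left, e1, e2]
    simp only [inner_sub_left, zero_sub, inner_neg_left] at h1
    linarith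
  have hcomp : (LinearMap.id + A) ∘ₗ (K ∘ₗ Ft) = A := by
    ext w
    simp only [LinearMap.comp_apply, LinearMap.add_apply, LinearMap.id_apply, hA_def]
    have := hkey (Ft w)
    simp only [hA_def, LinearMap.comp_apply] at this
    rw [← this]
  -- determinants
  set D : ℝ := ∏ i, (1 + μ i) with hD_def
  have hdetid : LinearMap.det (LinearMap.id + A) = D := by
    apply hdetdiag
    intro i
    simp only [LinearMap.add_apply, LinearMap.id_apply, hAb i, add_smul, one_smul]
  have hγprod : γ = ∏ i, μ i := by
    rw [hγ]
    exact hdetdiag A μ hAb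
  have hdetKF : D * LinearMap.det (K ∘ₗ Ft) = γ := by
    rw [← hdetid, ← LinearMap.det_comp, hcomp, hγ]
  -- det I = det (K ∘ Ft)
  have hdetI : LinearMap.det I = LinearMap.det (K ∘ₗ Ft) := by
    have c : Module.Basis (Fin l) ℝ V₁ := Module.finBasisOfFinrankEq ℝ V₁ hl₁
    rw [hIK, ← LinearMap.det_toMatrix c, ← LinearMap.det_toMatrix b.toBasis,
      LinearMap.toMatrix_comp c b.toBasis c, LinearMap.toMatrix_comp b.toBasis c b.toBasis,
      Matrix.det_mul_comm]
  -- numeric estimates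
  have hγpos : 0 < γ := by
    rw [hγprod]; exact Finset.prod_pos fun i _ => hμpos i
  have hγle1 : γ ≤ 1 := by
    rw [hγprod]
    exact Finset.prod_le_one (fun i _ => (hμpos i).le) (fun i _ => hμle i)
  have hDpos : 0 < D := Finset.prod_pos fun i _ => by linarith [hμpos i]
  have hDle : D ≤ 2 ^ l := by
    calc D ≤ ∏ _i : Fin l, (2 : ℝ) :=
          Finset.prod_le_prod (fun i _ => by linarith [hμpos i])
            (fun i _ => by linarith [hμle i])
      _ = 2 ^ l := by simp
  have hdetIval : LinearMap.det I = γ / D := by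
    rw [hdetI, eq_div_iff hDpos.ne', mul_comm, hdetKF]
  have hγ2l : γ ^ (2 * l) ≤ γ ^ 2 := by
    rcases Nat.eq_zero_or_pos l with rfl | hlpos
    · have : γ = 1 := by rw [hγprod]; simp
      simp [this]
    · exact pow_le_pow_of_le_one hγpos.le hγle1 (by omega)
  have hD2 : D ^ 2 ≤ 4 ^ l := by
    calc D ^ 2 ≤ ((2 : ℝ) ^ l) ^ 2 := pow_le_pow_left₀ hDpos.le hDle 2
      _ = 4 ^ l := by rw [← pow_mul, mul_comm, pow_mul]; norm_num
  have h4pos : (0 : ℝ) < 4 ^ l := by positivity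
  have hz : (4 : ℝ) ^ (-(l : ℤ)) = ((4 : ℝ) ^ l)⁻¹ := by
    rw [zpow_neg, zpow_natCast]
  rw [ge_iff_le, hz, hdetIval, div_pow]
  calc ((4 : ℝ) ^ l)⁻¹ * γ ^ (2 * l) ≤ ((4 : ℝ) ^ l)⁻¹ * γ ^ 2 := by
        apply mul_le_mul_of_nonneg_left hγ2l (by positivity)
    _ = γ ^ 2 / 4 ^ l := by ring
    _ ≤ γ ^ 2 / D ^ 2 := div_le_div_of_nonneg_left (by positivity) (by positivity) hD2
end

section
/- For every (v,w) ∈ F one has ‖v‖² ≥ γ · ‖w‖². -/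
open RealInnerProductSpace

/-- Let `V₁, V₂` be real inner product spaces of dimension `l`, let `F` be the
graph of a linear isomorphism `F̃ : V₂ → V₁` with `‖v‖ ≤ ‖w‖` for all
`(v,w) ∈ F`, and let `γ = det(F̃* ∘ F̃)`.  Then `‖v‖² ≥ γ·‖w‖²` for every
`(v,w) ∈ F`. -/
theorem stmt_2 {V₁ V₂ : Type*}
    [NormedAddCommGroup V₁] [InnerProductSpace ℝ V₁]
    [NormedAddCommGroup V₂] [InnerProductSpace ℝ V₂]
    [FiniteDimensional ℝ V₁] [FiniteDimensional ℝ V₂]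
    (l : ℕ) (hl₁ : Module.finrank ℝ V₁ = l) (hl₂ : Module.finrank ℝ V₂ = l)
    (Ft : V₂ →ₗ[ℝ] V₁) (hFt : Function.Bijective Ft)
    (F : Submodule ℝ (V₁ × V₂))
    (hF : ∀ p : V₁ × V₂, p ∈ F ↔ p.1 = Ft p.2)
    (hle : ∀ p ∈ F, ‖(p : V₁ × V₂).1‖ ≤ ‖(p : V₁ × V₂).2‖)
    (γ : ℝ) (hγ : γ = LinearMap.det ((LinearMap.adjoint Ft).comp Ft)) :
    ∀ p ∈ F, ‖(p : V₁ × V₂).1‖ ^ 2 ≥ γ * ‖(p : V₁ × V₂).2‖ ^ 2 := by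
  have hle' : ∀ w : V₂, ‖Ft w‖ ≤ ‖w‖ := fun w => hle (Ft w, w) ((hF _).mpr rfl)
  set T := (LinearMap.adjoint Ft).comp Ft with hTdef
  have hsymm : T.IsSymmetric := by
    intro x y
    simp [hTdef, LinearMap.adjoint_inner_left, LinearMap.adjoint_inner_right]
  have hn : Module.finrank ℝ V₂ = Module.finrank ℝ V₂ := rfl
  set b := hsymm.eigenvectorBasis hn with hb
  set μ := hsymm.eigenvalues hn with hμdef
  have hTb : ∀ i, T (b i) = μ i • b i := fun i => by
    rw [hb, hμdef]; exact_mod_cast hsymm.apply_eigenvectorBasis hn i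
  have hTinner : ∀ w : V₂, ⟪T w, w⟫ = ‖Ft w‖ ^ 2 := by
    intro w
    rw [hTdef]
    simp [LinearMap.adjoint_inner_left, real_inner_self_eq_norm_sq]
  have hμval : ∀ i, μ i = ‖Ft (b i)‖ ^ 2 := by
    intro i
    have := hTinner (b i)
    rw [hTb i, real_inner_smul_left, real_inner_self_eq_norm_sq, b.orthonormal.1 i] at this
    simpa using this
  have hμpos : ∀ i, 0 < μ i := by
    intro i
    rw [hμval i]
    have hb0 : Ft (b i) ≠ 0 := by
      intro h
      exact b.toBasis.ne_zero i (by simpa using hFt.injective (h.trans (map_zero Ft).symm))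
    exact pow_pos (norm_pos_iff.mpr hb0) 2
  have hμle1 : ∀ i, μ i ≤ 1 := by
    intro i
    rw [hμval i]
    calc ‖Ft (b i)‖ ^ 2 ≤ ‖b i‖ ^ 2 := by
          gcongr; exact hle' (b i)
      _ = 1 := by rw [b.orthonormal.1 i]; norm_num
  -- determinant equals product of eigenvalues
  have hdet : LinearMap.det T = ∏ i, μ i := by
    rw [← LinearMap.det_toMatrix b.toBasis]
    have : LinearMap.toMatrix b.toBasis b.toBasis T = Matrix.diagonal μ := by
      ext i j
      rw [LinearMap.toMatrix_apply]
      simp only [OrthonormalBasis.coe_toBasis]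
      rw [hTb j, map_smul]
      rw [show b.toBasis.repr (b j) = b.toBasis.repr (b.toBasis j) from by
        rw [OrthonormalBasis.coe_toBasis], Module.Basis.repr_self]
      by_cases h : i = j <;> simp [Matrix.diagonal, h, Finsupp.single_apply, eq_comm]
    rw [this, Matrix.det_diagonal]
  have hprod_le : ∀ i, (∏ j, μ j) ≤ μ i := by
    intro i
    rw [← Finset.mul_prod_erase Finset.univ μ (Finset.mem_univ i)]
    have h1 : ∏ j ∈ Finset.univ.erase i, μ j ≤ 1 :=
      Finset.prod_le_one (fun j _ => (hμpos j).le) (fun j _ => hμle1 j)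
    nlinarith [hμpos i]
  intro p hp
  rw [hF] at hp
  rw [hp]
  have key : ∀ w : V₂, γ * ‖w‖ ^ 2 ≤ ‖Ft w‖ ^ 2 := by
    intro w
    have e1 : ‖Ft w‖ ^ 2 = ∑ i, μ i * ⟪b i, w⟫ ^ 2 := by
      rw [← hTinner w, ← b.sum_inner_mul_inner (T w) w]
      refine Finset.sum_congr rfl fun i _ => ?_
      have : ⟪T w, b i⟫ = μ i * ⟪b i, w⟫ := by
        rw [hsymm w (b i), hTb i, real_inner_smul_right, real_inner_comm w (b i)]
      rw [this]
      ring
    have e2 : ‖w‖ ^ 2 = ∑ i, ⟪b i, w⟫ ^ 2 := by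
      rw [← real_inner_self_eq_norm_sq, ← b.sum_inner_mul_inner w w]
      refine Finset.sum_congr rfl fun i _ => ?_
      rw [real_inner_comm w (b i)]; ring
    rw [e1, e2, hγ, hdet, Finset.mul_sum]
    refine Finset.sum_le_sum fun i _ => ?_
    have := hprod_le i
    nlinarith [sq_nonneg (⟪b i, w⟫ : ℝ)]
  exact key p.2
end

section
/- For every (v⊥, w⊥) in the orthogonal complement F⊥ of F in V₁ × V₂ (with respect to the product inner product) one has ‖w⊥‖² ≥ γ · ‖v⊥‖². -/
open RealInnerProductSpace

section Aux

variable {E : Type*} [NormedAddCommGroup E] [InnerProductSpace ℝ E] [FiniteDimensional ℝ E]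

/-- A symmetric operator with eigenvalues in `[0,1]` satisfies
`⟪T v, v⟫ ≥ det T * ‖v‖²`. -/
lemma aux_det_le {T : E →ₗ[ℝ] E} (hT : T.IsSymmetric)
    (hnn : ∀ x : E, 0 ≤ ⟪T x, x⟫) (hle1 : ∀ x : E, ⟪T x, x⟫ ≤ ‖x‖ ^ 2) (v : E) :
    LinearMap.det T * ‖v‖ ^ 2 ≤ ⟪T v, v⟫ := by
  set n := Module.finrank ℝ E with hn
  have hfr : Module.finrank ℝ E = n := rfl
  set b := hT.eigenvectorBasis hfr with hb
  set μ := hT.eigenvalues hfr with hμ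
  have happly : ∀ i, T (b i) = μ i • b i := fun i => hT.apply_eigenvectorBasis hfr i
  have hμnn : ∀ i, 0 ≤ μ i := by
    intro i
    have := hnn (b i)
    rw [happly i, real_inner_smul_left, real_inner_self_eq_norm_sq,
      b.orthonormal.1 i] at this
    simpa using this
  have hμle : ∀ i, μ i ≤ 1 := by
    intro i
    have := hle1 (b i)
    rw [happly i, real_inner_smul_left, real_inner_self_eq_norm_sq,
      b.orthonormal.1 i] at this
    simpa using this
  -- determinant is the product of eigenvalues
  have hdet : LinearMap.det T = ∏ i, μ i := by
    rw [← LinearMap.det_toMatrix b.toBasis]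
    have : LinearMap.toMatrix b.toBasis b.toBasis T = Matrix.diagonal μ := by
      ext i j
      rw [LinearMap.toMatrix_apply, OrthonormalBasis.coe_toBasis, happly j, map_smul]
      rw [← OrthonormalBasis.coe_toBasis b, Module.Basis.repr_self, Finsupp.smul_apply, Finsupp.single_apply, Matrix.diagonal_apply]
      rcases eq_or_ne i j with h | h
      · subst h; simp
      · simp [h, Ne.symm h]
    rw [this, Matrix.det_diagonal]
  -- product of eigenvalues is at most each eigenvalue
  have hprod_le : ∀ i, (∏ j, μ j) ≤ μ i := by
    intro i
    rw [← Finset.prod_erase_mul Finset.univ μ (Finset.mem_univ i)]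
    calc (∏ j ∈ Finset.univ.erase i, μ j) * μ i ≤ 1 * μ i := by
          apply mul_le_mul_of_nonneg_right _ (hμnn i)
          exact Finset.prod_le_one (fun j _ => hμnn j) (fun j _ => hμle j)
      _ = μ i := one_mul _
  -- expand inner product in the eigenbasis
  have hTvv : ⟪T v, v⟫ = ∑ i, μ i * (b.repr v i) ^ 2 := by
    rw [← b.sum_inner_mul_inner (T v) v]
    apply Finset.sum_congr rfl
    intro i _
    rw [hT v (b i), happly i, real_inner_smul_right, b.repr_apply_apply,
      real_inner_comm v (b i)]
    ring
  have hnorm : ‖v‖ ^ 2 = ∑ i, (b.repr v i) ^ 2 := by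
    rw [← real_inner_self_eq_norm_sq, ← b.sum_inner_mul_inner v v]
    apply Finset.sum_congr rfl
    intro i _
    rw [b.repr_apply_apply, real_inner_comm v (b i)]
    ring
  rw [hTvv, hnorm, hdet, Finset.mul_sum]
  apply Finset.sum_le_sum
  intro i _
  exact mul_le_mul_of_nonneg_right (hprod_le i) (sq_nonneg _)

end Aux

/-- Let `V₁, V₂` be real inner product spaces of dimension `l`, let `F` be the
graph of a linear isomorphism `F̃ : V₂ → V₁` with `‖v‖ ≤ ‖w‖` for all
`(v,w) ∈ F`, and let `γ = det(F̃* ∘ F̃)`.  Then for every `(v⊥, w⊥)` in the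
orthogonal complement of `F` in `V₁ × V₂` (with respect to the product inner
product `⟨(v,w),(v',w')⟩ = ⟨v,v'⟩ + ⟨w,w'⟩`) one has `‖w⊥‖² ≥ γ·‖v⊥‖²`. -/
theorem stmt_3 {V₁ V₂ : Type*}
    [NormedAddCommGroup V₁] [InnerProductSpace ℝ V₁]
    [NormedAddCommGroup V₂] [InnerProductSpace ℝ V₂]
    [FiniteDimensional ℝ V₁] [FiniteDimensional ℝ V₂]
    (l : ℕ) (hl₁ : Module.finrank ℝ V₁ = l) (hl₂ : Module.finrank ℝ V₂ = l)
    (Ft : V₂ →ₗ[ℝ] V₁) (hFt : Function.Bijective Ft)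
    (F : Submodule ℝ (V₁ × V₂))
    (hF : ∀ p : V₁ × V₂, p ∈ F ↔ p.1 = Ft p.2)
    (hle : ∀ p ∈ F, ‖(p : V₁ × V₂).1‖ ≤ ‖(p : V₁ × V₂).2‖)
    (γ : ℝ) (hγ : γ = LinearMap.det ((LinearMap.adjoint Ft).comp Ft)) :
    ∀ x : V₁ × V₂, (∀ p ∈ F, ⟪x.1, (p : V₁ × V₂).1⟫ + ⟪x.2, (p : V₁ × V₂).2⟫ = 0) →
      ‖x.2‖ ^ 2 ≥ γ * ‖x.1‖ ^ 2 := by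
  intro x hx
  -- `‖Ft w‖ ≤ ‖w‖` for all `w`
  have hFt_le : ∀ w : V₂, ‖Ft w‖ ≤ ‖w‖ := by
    intro w
    have hmem : (Ft w, w) ∈ F := (hF (Ft w, w)).2 rfl
    simpa using hle (Ft w, w) hmem
  -- orthogonality gives `x.2 = - adjoint Ft x.1`
  have hkey : x.2 = -(LinearMap.adjoint Ft) x.1 := by
    have h : ∀ w : V₂, ⟪(LinearMap.adjoint Ft) x.1 + x.2, w⟫ = 0 := by
      intro w
      have hmem : (Ft w, w) ∈ F := (hF (Ft w, w)).2 rfl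
      have := hx (Ft w, w) hmem
      simp only at this
      rw [inner_add_left, LinearMap.adjoint_inner_left]
      linarith [this]
    have h0 : (LinearMap.adjoint Ft) x.1 + x.2 = 0 :=
      inner_self_eq_zero.mp (h ((LinearMap.adjoint Ft) x.1 + x.2))
    exact eq_neg_of_add_eq_zero_right h0
  -- set T = Ft ∘ adjoint Ft
  set T : V₁ →ₗ[ℝ] V₁ := Ft.comp (LinearMap.adjoint Ft) with hT
  have hTsymm : T.IsSymmetric := by
    intro u v
    simp only [hT, LinearMap.comp_apply]
    rw [← LinearMap.adjoint_inner_right Ft ((LinearMap.adjoint Ft) u) v,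
      LinearMap.adjoint_inner_left Ft ((LinearMap.adjoint Ft) v) u]
  have hTvv : ∀ u : V₁, ⟪T u, u⟫ = ‖(LinearMap.adjoint Ft) u‖ ^ 2 := by
    intro u
    rw [hT, LinearMap.comp_apply,
      ← LinearMap.adjoint_inner_right Ft ((LinearMap.adjoint Ft) u) u,
      real_inner_self_eq_norm_sq]
  have hnn : ∀ u : V₁, 0 ≤ ⟪T u, u⟫ := fun u => by rw [hTvv]; positivity
  have hadj_le : ∀ u : V₁, ‖(LinearMap.adjoint Ft) u‖ ≤ ‖u‖ := by
    intro u
    by_cases h0 : ‖(LinearMap.adjoint Ft) u‖ = 0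
    · rw [h0]; positivity
    · have h1 : ‖(LinearMap.adjoint Ft) u‖ ^ 2 = ⟪T u, u⟫ := (hTvv u).symm
      have h2 : ⟪T u, u⟫ ≤ ‖T u‖ * ‖u‖ := real_inner_le_norm _ _
      have h3 : ‖T u‖ ≤ ‖(LinearMap.adjoint Ft) u‖ := by
        rw [hT]; exact hFt_le _
      have h4 : ‖(LinearMap.adjoint Ft) u‖ ^ 2 ≤ ‖(LinearMap.adjoint Ft) u‖ * ‖u‖ := by
        calc ‖(LinearMap.adjoint Ft) u‖ ^ 2 = ⟪T u, u⟫ := h1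
          _ ≤ ‖T u‖ * ‖u‖ := h2
          _ ≤ ‖(LinearMap.adjoint Ft) u‖ * ‖u‖ :=
            mul_le_mul_of_nonneg_right h3 (norm_nonneg _)
      have hpos : 0 < ‖(LinearMap.adjoint Ft) u‖ :=
        lt_of_le_of_ne (norm_nonneg _) (Ne.symm h0)
      nlinarith
  have hle1 : ∀ u : V₁, ⟪T u, u⟫ ≤ ‖u‖ ^ 2 := by
    intro u
    rw [hTvv]
    have := hadj_le u
    nlinarith [norm_nonneg ((LinearMap.adjoint Ft) u), norm_nonneg u]
  have b₁ : Module.Basis (Fin l) ℝ V₁ := (Module.finBasis ℝ V₁).reindex (finCongr hl₁)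
  have b₂ : Module.Basis (Fin l) ℝ V₂ := (Module.finBasis ℝ V₂).reindex (finCongr hl₂)
  have hdetT : γ = LinearMap.det T := by
    rw [hγ, hT, ← LinearMap.det_toMatrix b₂, ← LinearMap.det_toMatrix b₁,
      LinearMap.toMatrix_comp b₂ b₁ b₂ (LinearMap.adjoint Ft) Ft,
      LinearMap.toMatrix_comp b₁ b₂ b₁ Ft (LinearMap.adjoint Ft),
      Matrix.det_mul, Matrix.det_mul, mul_comm]
  have := aux_det_le hTsymm hnn hle1 x.1
  rw [hkey, norm_neg, ← hTvv x.1]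
  rw [hdetT]
  linarith
end
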